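/- arXiv:1902.09946 — 5 statements merged into one kernel-verified Lean document; each statement's English description precedes it below -/
import Mathlib

section
/- For the randomized Kaczmarz method with row i sampled with probability ‖a_i‖²/‖A‖_F² and stepsize α ∈ (0,2), the iterates satisfy E[‖x^{k+1} − x*_{k+1}‖²] ≤ (1 − α(2−α)·λ_min^nz(AAᵀ)/‖A‖_F²)·E[‖x^k − x*_k‖²], where x*_k is the projection of x^k onto the solution set. -/
open Matrix Finset

/-- The smallest nonzero eigenvalue of a real square matrix. -/
noncomputable def lamMinNZ {k : ℕ} (M : Matrix (Fin k) (Fin k) ℝ) : ℝ :=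
  sInf {μ : ℝ | (∃ v : Fin k → ℝ, v ≠ 0 ∧ M.mulVec v = μ • v) ∧ μ ≠ 0}

/-- Kaczmarz iterates driven by a sequence of sampled row indices. -/
noncomputable def kacIter {m n : ℕ} (A : Matrix (Fin m) (Fin n) ℝ) (b : Fin m → ℝ)
    (α : ℝ) (x0 : Fin n → ℝ) : (k : ℕ) → (Fin k → Fin m) → (Fin n → ℝ)
  | 0, _ => x0
  | (k + 1), s =>
      let x := kacIter A b α x0 k (fun j => s j.castSucc)
      let i := s (Fin.last k)
      x - (α * ((A i ⬝ᵥ x - b i) / (A i ⬝ᵥ A i))) • A i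

lemma dp_self_nonneg {n : ℕ} (v : Fin n → ℝ) : 0 ≤ v ⬝ᵥ v :=
  Finset.sum_nonneg fun _ _ => mul_self_nonneg _

lemma dp_self_pos {n : ℕ} {v : Fin n → ℝ} (hv : v ≠ 0) : 0 < v ⬝ᵥ v :=
  (dp_self_nonneg v).lt_of_ne fun h => hv (dotProduct_self_eq_zero.mp h.symm)

lemma sum_dp {ι : Type*} (s : Finset ι) {n : ℕ} (f : ι → Fin n → ℝ) (w : Fin n → ℝ) :
    (∑ i ∈ s, f i) ⬝ᵥ w = ∑ i ∈ s, f i ⬝ᵥ w := by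
  simp only [dotProduct, Finset.sum_apply, Finset.sum_mul]
  exact Finset.sum_comm

lemma lamMinNZ_bddBelow {m n : ℕ} (A : Matrix (Fin m) (Fin n) ℝ) :
    BddBelow {μ : ℝ | (∃ v : Fin m → ℝ, v ≠ 0 ∧ (A * Aᵀ).mulVec v = μ • v) ∧ μ ≠ 0} := by
  refine ⟨0, fun μ hμ => ?_⟩
  obtain ⟨⟨v, hv, hev⟩, -⟩ := hμ
  have h1 : v ⬝ᵥ (A * Aᵀ).mulVec v = μ * (v ⬝ᵥ v) := by
    rw [hev, dotProduct_smul]; rfl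
  have h2 : v ⬝ᵥ (A * Aᵀ).mulVec v = (Aᵀ.mulVec v) ⬝ᵥ (Aᵀ.mulVec v) := by
    rw [← mulVec_mulVec, dotProduct_mulVec, ← mulVec_transpose]
  nlinarith [dp_self_nonneg (Aᵀ.mulVec v), dp_self_pos hv]

lemma rayleigh {m n : ℕ} (A : Matrix (Fin m) (Fin n) ℝ) (e : Fin n → ℝ)
    (he : ∀ w, A.mulVec w = 0 → e ⬝ᵥ w = 0) :
    lamMinNZ (A * Aᵀ) * (e ⬝ᵥ e) ≤ A.mulVec e ⬝ᵥ A.mulVec e := by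
  have hB : (Aᵀ * A).IsHermitian := by
    simpa using isHermitian_conjTranspose_mul_self A
  set B := Aᵀ * A with hBdef
  have hsymm : Bᵀ = B := by rw [hBdef, transpose_mul, transpose_transpose]
  set v : Fin n → (Fin n → ℝ) := fun j => (hB.eigenvectorBasis j : Fin n → ℝ) with hvdef
  set μ : Fin n → ℝ := hB.eigenvalues with hμdef
  have heig : ∀ j, B.mulVec (v j) = μ j • v j := hB.mulVec_eigenvectorBasis
  set c : Fin n → ℝ := fun j => v j ⬝ᵥ e with hcdef
  have hexp : ∑ j, (fun j => c j • v j) j = e := by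
    have := congrArg WithLp.ofLp (hB.eigenvectorBasis.sum_repr' (WithLp.toLp 2 e))
    simp only [WithLp.ofLp_sum, WithLp.ofLp_smul] at this
    convert this using 2 with j
    simp [hcdef, hvdef, EuclideanSpace.inner_eq_star_dotProduct, dotProduct_comm]
  have hvne : ∀ j, v j ≠ 0 := fun j => (WithLp.ofLp_eq_zero 2).ne.2 <| hB.eigenvectorBasis.orthonormal.ne_zero j
  have hczero : ∀ j, μ j = 0 → c j = 0 := by
    intro j hμj
    have hBv : B.mulVec (v j) = 0 := by rw [heig j, hμj, zero_smul]
    have hAv : A.mulVec (v j) = 0 := by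
      have h0 : (A.mulVec (v j)) ⬝ᵥ (A.mulVec (v j)) = 0 := by
        have h : v j ⬝ᵥ B.mulVec (v j) = (A.mulVec (v j)) ⬝ᵥ (A.mulVec (v j)) := by
          rw [hBdef, ← mulVec_mulVec, dotProduct_mulVec, vecMul_transpose]
        rw [← h, hBv, dotProduct_zero]
      exact dotProduct_self_eq_zero.mp h0
    rw [hcdef]
    simpa [dotProduct_comm] using he (v j) hAv
  have hkey : ∀ j ∈ Finset.univ, lamMinNZ (A * Aᵀ) * c j ^ 2 ≤ μ j * c j ^ 2 := by
    intro j _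
    rcases eq_or_ne (μ j) 0 with hμj | hμj
    · rw [hczero j hμj]; simp
    · have hAv : A.mulVec (v j) ≠ 0 := by
        intro h
        apply hμj
        have h2 : B.mulVec (v j) = 0 := by
          rw [hBdef, ← mulVec_mulVec, h, mulVec_zero]
        rw [heig j] at h2
        rcases smul_eq_zero.mp h2 with h' | h'
        · exact h'
        · exact absurd h' (hvne j)
      have hmem : μ j ∈ {ν : ℝ | (∃ u : Fin m → ℝ, u ≠ 0 ∧ (A * Aᵀ).mulVec u = ν • u) ∧ ν ≠ 0} := by
        refine ⟨⟨A.mulVec (v j), hAv, ?_⟩, hμj⟩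
        calc (A * Aᵀ).mulVec (A.mulVec (v j)) = (A * Aᵀ * A).mulVec (v j) := by
              rw [mulVec_mulVec]
          _ = A.mulVec (B.mulVec (v j)) := by
              rw [mulVec_mulVec, hBdef, Matrix.mul_assoc]
          _ = μ j • A.mulVec (v j) := by rw [heig j, mulVec_smul]
      exact mul_le_mul_of_nonneg_right (csInf_le (lamMinNZ_bddBelow A) hmem) (sq_nonneg _)
  have hee : e ⬝ᵥ e = ∑ j, c j ^ 2 := by
    nth_rewrite 1 [← hexp]
    rw [sum_dp]
    refine Finset.sum_congr rfl fun j _ => ?_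
    rw [smul_dotProduct, smul_eq_mul, sq]
  have hq : A.mulVec e ⬝ᵥ A.mulVec e = ∑ j, μ j * c j ^ 2 := by
    have h1 : e ⬝ᵥ B.mulVec e = A.mulVec e ⬝ᵥ A.mulVec e := by
      rw [hBdef, ← mulVec_mulVec, dotProduct_mulVec, vecMul_transpose]
    rw [← h1]
    nth_rewrite 1 [← hexp]
    rw [sum_dp]
    refine Finset.sum_congr rfl fun j _ => ?_
    rw [smul_dotProduct, smul_eq_mul, dotProduct_mulVec, ← mulVec_transpose, hsymm, heig j,
      smul_dotProduct, smul_eq_mul]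
    ring
  rw [hee, hq, Finset.mul_sum]
  exact Finset.sum_le_sum hkey

lemma proj_orth {m n : ℕ} (A : Matrix (Fin m) (Fin n) ℝ) (b : Fin m → ℝ)
    (proj : (Fin n → ℝ) → (Fin n → ℝ))
    (hproj : ∀ x, A.mulVec (proj x) = b ∧
      ∀ z, A.mulVec z = b → (x - proj x) ⬝ᵥ (x - proj x) ≤ (x - z) ⬝ᵥ (x - z))
    (x : Fin n → ℝ) : ∀ w, A.mulVec w = 0 → (x - proj x) ⬝ᵥ w = 0 := by
  intro w hw
  rcases eq_or_ne w 0 with rfl | hwne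
  · simp
  have hq : (0:ℝ) < w ⬝ᵥ w := dp_self_pos hwne
  set e := x - proj x with hedef
  set s : ℝ := e ⬝ᵥ w with hsdef
  set t : ℝ := s / (w ⬝ᵥ w) with htdef
  have hz : A.mulVec (proj x + t • w) = b := by
    rw [mulVec_add, mulVec_smul, hw, (hproj x).1]; simp
  have hle := (hproj x).2 _ hz
  have hxz : x - (proj x + t • w) = e - t • w := by
    rw [hedef]; abel
  rw [hxz, ← hedef] at hle
  have hexpand : (e - t • w) ⬝ᵥ (e - t • w)
      = e ⬝ᵥ e - 2*t*s + t*t*(w ⬝ᵥ w) := by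
    simp only [sub_dotProduct, dotProduct_sub, smul_dotProduct, dotProduct_smul, smul_eq_mul,
      dotProduct_comm w e, ← hsdef]
    ring
  rw [hexpand] at hle
  have hs2 : s * s ≤ 0 := by
    rw [htdef] at hle
    have h1 : 2 * (s / (w ⬝ᵥ w)) * s = 2 * (s*s) / (w ⬝ᵥ w) := by ring
    have h2 : (s / (w ⬝ᵥ w)) * (s / (w ⬝ᵥ w)) * (w ⬝ᵥ w) = s*s/(w ⬝ᵥ w) := by
      have hq0 : (w ⬝ᵥ w) ≠ 0 := ne_of_gt hq
      field_simp
    have h3 : 2*(s*s)/(w ⬝ᵥ w) = 2*(s*s/(w ⬝ᵥ w)) := by ring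
    rw [h1, h2, h3] at hle
    have hdiv : s*s/(w ⬝ᵥ w) ≤ 0 := by linarith
    rcases div_nonpos_iff.mp hdiv with ⟨_, h⟩ | ⟨h, _⟩
    · linarith
    · exact h
  have h4 := mul_self_nonneg s
  have h5 : s = 0 := by nlinarith
  simpa [hsdef] using h5

lemma step_ineq {m n : ℕ} (A : Matrix (Fin m) (Fin n) ℝ) (b : Fin m → ℝ)
    (hrows : ∀ i, A i ≠ 0) {α : ℝ} (hα0 : 0 < α) (hα2 : α < 2)
    (prob : Fin m → ℝ) (hprob : ∀ i, prob i = (A i ⬝ᵥ A i) / (∑ j, A j ⬝ᵥ A j))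
    (proj : (Fin n → ℝ) → (Fin n → ℝ))
    (hproj : ∀ x, A.mulVec (proj x) = b ∧
      ∀ z, A.mulVec z = b → (x - proj x) ⬝ᵥ (x - proj x) ≤ (x - z) ⬝ᵥ (x - z))
    (hm : 0 < m) (x : Fin n → ℝ) :
    ∑ i, prob i *
      ((x - (α * ((A i ⬝ᵥ x - b i) / (A i ⬝ᵥ A i))) • A i
          - proj (x - (α * ((A i ⬝ᵥ x - b i) / (A i ⬝ᵥ A i))) • A i)) ⬝ᵥ
        (x - (α * ((A i ⬝ᵥ x - b i) / (A i ⬝ᵥ A i))) • A i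
          - proj (x - (α * ((A i ⬝ᵥ x - b i) / (A i ⬝ᵥ A i))) • A i)))
      ≤ (1 - α * (2 - α) * lamMinNZ (A * Aᵀ) / (∑ j, A j ⬝ᵥ A j)) *
        ((x - proj x) ⬝ᵥ (x - proj x)) := by
  set F := ∑ j, A j ⬝ᵥ A j with hFdef
  have hFpos : 0 < F :=
    Finset.sum_pos (fun j _ => dp_self_pos (hrows j)) ⟨⟨0, hm⟩, Finset.mem_univ _⟩
  have hF0 : F ≠ 0 := ne_of_gt hFpos
  set e := x - proj x with hedef
  have hb : ∀ i, b i = A i ⬝ᵥ proj x := fun i => by rw [← (hproj x).1]; rfl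
  have hr : ∀ i, A i ⬝ᵥ x - b i = A i ⬝ᵥ e := fun i => by
    rw [hb i, hedef, dotProduct_sub]
  have hprobnn : ∀ i, 0 ≤ prob i := fun i => by
    rw [hprob i]; exact div_nonneg (dp_self_nonneg _) hFpos.le
  refine le_trans (Finset.sum_le_sum (fun i _ =>
    mul_le_mul_of_nonneg_left ((hproj _).2 (proj x) (hproj x).1) (hprobnn i))) ?_
  have hrewrite : ∀ i : Fin m,
      x - (α * ((A i ⬝ᵥ x - b i) / (A i ⬝ᵥ A i))) • A i - proj x
        = e - (α * ((A i ⬝ᵥ e) / (A i ⬝ᵥ A i))) • A i := fun i => by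
    rw [hr i, sub_right_comm, ← hedef]
  have hval : ∀ i : Fin m,
      prob i * ((e - (α * ((A i ⬝ᵥ e) / (A i ⬝ᵥ A i))) • A i) ⬝ᵥ
          (e - (α * ((A i ⬝ᵥ e) / (A i ⬝ᵥ A i))) • A i))
        = prob i * (e ⬝ᵥ e) - (α * (2 - α) / F) * (A i ⬝ᵥ e)^2 := by
    intro i
    have hq0 : A i ⬝ᵥ A i ≠ 0 := ne_of_gt (dp_self_pos (hrows i))
    set t : ℝ := α * ((A i ⬝ᵥ e) / (A i ⬝ᵥ A i)) with htdef
    have hex : (e - t • A i) ⬝ᵥ (e - t • A i)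
        = e ⬝ᵥ e - 2*t*(A i ⬝ᵥ e) + t*t*(A i ⬝ᵥ A i) := by
      simp only [sub_dotProduct, dotProduct_sub, smul_dotProduct, dotProduct_smul, smul_eq_mul,
        dotProduct_comm (A i) e]
      ring
    rw [hex, hprob i, htdef]
    field_simp
    ring
  have hsum1 : ∑ i, prob i = 1 := by
    simp only [hprob]
    rw [← Finset.sum_div, ← hFdef, div_self hF0]
  have hAe : ∑ i, (A i ⬝ᵥ e)^2 = A.mulVec e ⬝ᵥ A.mulVec e := by
    simp [dotProduct, Matrix.mulVec, sq]
  have hsum : (∑ i, prob i *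
      ((x - (α * ((A i ⬝ᵥ x - b i) / (A i ⬝ᵥ A i))) • A i - proj x) ⬝ᵥ
        (x - (α * ((A i ⬝ᵥ x - b i) / (A i ⬝ᵥ A i))) • A i - proj x)))
      = (e ⬝ᵥ e) - (α * (2 - α) / F) * (A.mulVec e ⬝ᵥ A.mulVec e) := by
    have hcongr : ∀ i ∈ Finset.univ, prob i *
        ((x - (α * ((A i ⬝ᵥ x - b i) / (A i ⬝ᵥ A i))) • A i - proj x) ⬝ᵥ
          (x - (α * ((A i ⬝ᵥ x - b i) / (A i ⬝ᵥ A i))) • A i - proj x))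
        = prob i * (e ⬝ᵥ e) - (α * (2 - α) / F) * (A i ⬝ᵥ e)^2 := fun i _ => by
      rw [hrewrite i]; exact hval i
    rw [Finset.sum_congr rfl hcongr, Finset.sum_sub_distrib, ← Finset.sum_mul, hsum1, one_mul,
      ← Finset.mul_sum, hAe]
  have hray := rayleigh A e (proj_orth A b proj hproj x)
  have h2α : 0 < 2 - α := by linarith
  have hcoef : 0 ≤ α * (2 - α) / F := by positivity
  have hmul := mul_le_mul_of_nonneg_left hray hcoef
  have hrhs : (1 - α * (2 - α) * lamMinNZ (A * Aᵀ) / F) * (e ⬝ᵥ e)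
      = e ⬝ᵥ e - (α * (2 - α) / F) * (lamMinNZ (A * Aᵀ) * (e ⬝ᵥ e)) := by ring
  rw [hsum, hrhs]
  linarith [hmul]

theorem stmt6 (m n : ℕ) (A : Matrix (Fin m) (Fin n) ℝ) (b : Fin m → ℝ)
    (hrows : ∀ i, A i ≠ 0) (hcons : ∃ z, A.mulVec z = b)
    (α : ℝ) (hα0 : 0 < α) (hα2 : α < 2)
    (prob : Fin m → ℝ)
    (hprob : ∀ i, prob i = (A i ⬝ᵥ A i) / (∑ j, A j ⬝ᵥ A j))
    (proj : (Fin n → ℝ) → (Fin n → ℝ))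
    (hproj : ∀ x, A.mulVec (proj x) = b ∧
      ∀ z, A.mulVec z = b → (x - proj x) ⬝ᵥ (x - proj x) ≤ (x - z) ⬝ᵥ (x - z))
    (x0 : Fin n → ℝ) (k : ℕ) :
    (∑ s : Fin (k + 1) → Fin m, (∏ j, prob (s j)) *
        ((kacIter A b α x0 (k + 1) s - proj (kacIter A b α x0 (k + 1) s)) ⬝ᵥ
          (kacIter A b α x0 (k + 1) s - proj (kacIter A b α x0 (k + 1) s))))
      ≤ (1 - α * (2 - α) * lamMinNZ (A * Aᵀ) / (∑ j, A j ⬝ᵥ A j)) *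
        (∑ s : Fin k → Fin m, (∏ j, prob (s j)) *
          ((kacIter A b α x0 k s - proj (kacIter A b α x0 k s)) ⬝ᵥ
            (kacIter A b α x0 k s - proj (kacIter A b α x0 k s)))) := by
  rcases Nat.eq_zero_or_pos m with hm | hm
  · subst hm
    haveI : IsEmpty (Fin (k + 1) → Fin 0) := ⟨fun f => (f 0).elim0⟩
    rw [Finset.univ_eq_empty (α := Fin (k + 1) → Fin 0), Finset.sum_empty]
    have hsum0 : (∑ j : Fin 0, A j ⬝ᵥ A j) = 0 := by simp
    rw [hsum0, div_zero, sub_zero, one_mul]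
    exact Finset.sum_nonneg fun t _ =>
      mul_nonneg (Finset.prod_nonneg fun j _ => (t j).elim0) (dp_self_nonneg _)
  · have hFpos : 0 < ∑ j, A j ⬝ᵥ A j :=
      Finset.sum_pos (fun j _ => dp_self_pos (hrows j)) ⟨⟨0, hm⟩, Finset.mem_univ _⟩
    have hprobnn : ∀ i, 0 ≤ prob i := fun i => by
      rw [hprob i]; exact div_nonneg (dp_self_nonneg _) hFpos.le
    set c : ℝ := 1 - α * (2 - α) * lamMinNZ (A * Aᵀ) / (∑ j, A j ⬝ᵥ A j) with hcdef
    set X : (Fin k → Fin m) → (Fin n → ℝ) := fun t => kacIter A b α x0 k t with hXdef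
    set w : (Fin k → Fin m) → ℝ := fun t => ∏ j, prob (t j) with hwdef
    set G : (Fin n → ℝ) → ℝ := fun y => (y - proj y) ⬝ᵥ (y - proj y) with hGdef
    set U : Fin m → (Fin n → ℝ) → (Fin n → ℝ) :=
      fun i y => y - (α * ((A i ⬝ᵥ y - b i) / (A i ⬝ᵥ A i))) • A i with hUdef
    have hwnn : ∀ t, 0 ≤ w t := fun t => Finset.prod_nonneg fun j _ => hprobnn _
    have h1 : ∀ (t : Fin k → Fin m) (i : Fin m),
        kacIter A b α x0 (k + 1) (Fin.snocEquiv (fun _ => Fin m) (i, t)) = U i (X t) := by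
      intro t i
      have hrestr : (fun j : Fin k => (Fin.snocEquiv (fun _ => Fin m) (i, t)) j.castSucc) = t := by
        funext j; simp [Fin.snocEquiv]
      have hlast : (Fin.snocEquiv (fun _ => Fin m) (i, t)) (Fin.last k) = i := by
        simp [Fin.snocEquiv]
      show (let x := kacIter A b α x0 k
              (fun j => (Fin.snocEquiv (fun _ => Fin m) (i, t)) j.castSucc);
            let i' := (Fin.snocEquiv (fun _ => Fin m) (i, t)) (Fin.last k);
            x - (α * ((A i' ⬝ᵥ x - b i') / (A i' ⬝ᵥ A i'))) • A i') = U i (X t)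
      rw [hrestr, hlast]
    have h2 : ∀ (t : Fin k → Fin m) (i : Fin m),
        (∏ j : Fin (k + 1), prob ((Fin.snocEquiv (fun _ => Fin m) (i, t)) j))
          = prob i * w t := by
      intro t i
      rw [Fin.prod_univ_castSucc]
      simp [Fin.snocEquiv, hwdef, mul_comm]
    calc (∑ s : Fin (k + 1) → Fin m, (∏ j, prob (s j)) *
            ((kacIter A b α x0 (k + 1) s - proj (kacIter A b α x0 (k + 1) s)) ⬝ᵥ
              (kacIter A b α x0 (k + 1) s - proj (kacIter A b α x0 (k + 1) s))))
        = ∑ p : Fin m × (Fin k → Fin m),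
            (∏ j, prob ((Fin.snocEquiv (fun _ => Fin m) p) j)) *
              G (kacIter A b α x0 (k + 1) (Fin.snocEquiv (fun _ => Fin m) p)) :=
          (Equiv.sum_comp (Fin.snocEquiv (fun _ => Fin m)) _).symm
      _ = ∑ i : Fin m, ∑ t : Fin k → Fin m, (prob i * w t) * G (U i (X t)) := by
          rw [Fintype.sum_prod_type]
          exact Finset.sum_congr rfl fun i _ => Finset.sum_congr rfl fun t _ => by
            rw [h1 t i, h2 t i]
      _ = ∑ t : Fin k → Fin m, ∑ i : Fin m, (prob i * w t) * G (U i (X t)) :=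
          Finset.sum_comm
      _ = ∑ t : Fin k → Fin m, w t * ∑ i : Fin m, prob i * G (U i (X t)) := by
          refine Finset.sum_congr rfl fun t _ => ?_
          rw [Finset.mul_sum]
          exact Finset.sum_congr rfl fun i _ => by ring
      _ ≤ ∑ t : Fin k → Fin m, w t * (c * G (X t)) := by
          refine Finset.sum_le_sum fun t _ => mul_le_mul_of_nonneg_left ?_ (hwnn t)
          exact step_ineq A b hrows hα0 hα2 prob hprob proj hproj hm (X t)
      _ = c * ∑ t : Fin k → Fin m, w t * G (X t) := by
          rw [Finset.mul_sum]
          exact Finset.sum_congr rfl fun t _ => by ring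
end

section
/- Under the same sampling setup, E_J[(Σ_{i∈J} ω_i·a_i a_iᵀ/‖a_i‖²)²] ⪯ ω_max²·λ_max^block·W, where λ_max^block = max over samplings J of λ_max(A_Jᵀ·diag(1/‖a_i‖², i∈J)·A_J) and W = Aᵀ·diag(p_i/‖a_i‖²)·A. -/
open Matrix Finset

/-- The largest eigenvalue of a real square matrix. -/
noncomputable def lamMax {n : ℕ} (M : Matrix (Fin n) (Fin n) ℝ) : ℝ :=
  sSup {μ : ℝ | ∃ v : Fin n → ℝ, v ≠ 0 ∧ M.mulVec v = μ • v}

variable {n : ℕ}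

lemma vecMulVec_mulVec' (a x : Fin n → ℝ) : (vecMulVec a a) *ᵥ x = (a ⬝ᵥ x) • a := by
  ext i
  simp [mulVec, vecMulVec_apply, dotProduct, Finset.mul_sum, mul_comm, mul_assoc, mul_left_comm]

lemma psd_smul {M : Matrix (Fin n) (Fin n) ℝ} (hM : M.PosSemidef) {c : ℝ} (hc : 0 ≤ c) :
    (c • M).PosSemidef := by
  refine Matrix.PosSemidef.of_dotProduct_mulVec_nonneg ?_ (fun x => ?_)
  · unfold Matrix.IsHermitian
    rw [conjTranspose_smul, hM.1]
    simp
  · rw [smul_mulVec, dotProduct_smul]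
    exact mul_nonneg hc (hM.dotProduct_mulVec_nonneg x)

lemma psd_vecMulVec (a : Fin n → ℝ) : (vecMulVec a a).PosSemidef := by
  refine Matrix.PosSemidef.of_dotProduct_mulVec_nonneg ?_ (fun x => ?_)
  · unfold Matrix.IsHermitian
    ext i j
    simp [vecMulVec_apply, conjTranspose_apply, mul_comm]
  · rw [vecMulVec_mulVec']
    simp only [star_trivial, dotProduct_smul]
    rw [smul_eq_mul, dotProduct_comm]
    exact mul_self_nonneg _

lemma psd_sum {ι : Type*} (s : Finset ι) (f : ι → Matrix (Fin n) (Fin n) ℝ)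
    (h : ∀ i ∈ s, (f i).PosSemidef) : (∑ i ∈ s, f i).PosSemidef :=
  Finset.sum_induction f _ (fun _ _ ha hb => ha.add hb) Matrix.PosSemidef.zero h

lemma conj_unitary_psd {M : Matrix (Fin n) (Fin n) ℝ} (hM : M.IsHermitian)
    (g : Fin n → ℝ) (hg : ∀ k, 0 ≤ g k) :
    ((hM.eigenvectorUnitary : Matrix (Fin n) (Fin n) ℝ) * diagonal g *
      (star (hM.eigenvectorUnitary : Matrix (Fin n) (Fin n) ℝ))).PosSemidef := by
  have h1 : (diagonal g).PosSemidef := Matrix.PosSemidef.diagonal hg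
  have := h1.mul_mul_conjTranspose_same (hM.eigenvectorUnitary : Matrix (Fin n) (Fin n) ℝ)
  simpa [Matrix.star_eq_conjTranspose, mul_assoc] using this

example {M : Matrix (Fin n) (Fin n) ℝ} (hM : M.IsHermitian) :
    M = (hM.eigenvectorUnitary : Matrix (Fin n) (Fin n) ℝ) * diagonal hM.eigenvalues *
      (star (hM.eigenvectorUnitary : Matrix (Fin n) (Fin n) ℝ)) := by
  have := hM.spectral_theorem
  simpa using this

lemma lemC {M : Matrix (Fin n) (Fin n) ℝ} (hM : M.IsHermitian) {c : ℝ}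
    (h : ∀ k, hM.eigenvalues k ≤ c) : (c • (1 : Matrix (Fin n) (Fin n) ℝ) - M).PosSemidef := by
  set U : Matrix (Fin n) (Fin n) ℝ := (hM.eigenvectorUnitary : Matrix (Fin n) (Fin n) ℝ) with hU
  have hUU : U * star U = 1 := (Matrix.mem_unitaryGroup_iff).mp hM.eigenvectorUnitary.2
  have hspec : M = U * diagonal hM.eigenvalues * star U := by
    have := hM.spectral_theorem; simpa using this
  have key : U * diagonal (fun k => c - hM.eigenvalues k) * star U
      = c • (1 : Matrix (Fin n) (Fin n) ℝ) - M := by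
    have hd : diagonal (fun k => c - hM.eigenvalues k)
        = c • (1 : Matrix (Fin n) (Fin n) ℝ) - diagonal hM.eigenvalues := by
      rw [← diagonal_one, ← diagonal_smul, diagonal_sub]
      try congr 1 with k
      try simp [smul_eq_mul]
    rw [hd, Matrix.mul_sub, Matrix.sub_mul, ← hspec]
    congr 1
    rw [Matrix.mul_smul, Matrix.smul_mul, mul_one, hUU]
  rw [← key]
  exact conj_unitary_psd hM _ (fun k => sub_nonneg.mpr (h k))

lemma lemL2 {M : Matrix (Fin n) (Fin n) ℝ} (hM : M.IsHermitian) {c : ℝ}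
    (h0 : ∀ k, 0 ≤ hM.eigenvalues k) (h1 : ∀ k, hM.eigenvalues k ≤ c) :
    (c • M - M * M).PosSemidef := by
  set U : Matrix (Fin n) (Fin n) ℝ := (hM.eigenvectorUnitary : Matrix (Fin n) (Fin n) ℝ) with hU
  have hUU : star U * U = 1 := (Matrix.mem_unitaryGroup_iff').mp hM.eigenvectorUnitary.2
  have hspec : M = U * diagonal hM.eigenvalues * star U := by
    have := hM.spectral_theorem; simpa using this
  have key : U * diagonal
        (fun k => c * hM.eigenvalues k - hM.eigenvalues k * hM.eigenvalues k) * star U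
      = c • M - M * M := by
    have hd : diagonal (fun k => c * hM.eigenvalues k - hM.eigenvalues k * hM.eigenvalues k)
        = c • diagonal hM.eigenvalues - diagonal hM.eigenvalues * diagonal hM.eigenvalues := by
      rw [diagonal_mul_diagonal, ← diagonal_smul, diagonal_sub]
      try congr 1 with k
      try simp [smul_eq_mul]
    obtain ⟨D, hD⟩ : ∃ D, diagonal hM.eigenvalues = D := ⟨_, rfl⟩
    rw [hd, hD]
    rw [hD] at hspec
    rw [hspec, Matrix.mul_sub, Matrix.sub_mul]
    congr 1
    · rw [Matrix.mul_smul, Matrix.smul_mul]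
    · have h2 : (U * D * star U) * (U * D * star U)
          = U * D * (star U * U) * (D * star U) := by noncomm_ring
      rw [h2, hUU, mul_one]
      noncomm_ring
  rw [← key]
  exact conj_unitary_psd hM _ (fun k => by have := h0 k; have := h1 k; nlinarith)

lemma eig_mem_set {M : Matrix (Fin n) (Fin n) ℝ} (hM : M.IsHermitian) (k : Fin n) :
    hM.eigenvalues k ∈ {μ : ℝ | ∃ v : Fin n → ℝ, v ≠ 0 ∧ M.mulVec v = μ • v} := by
  refine ⟨hM.eigenvectorBasis k, ?_, hM.mulVec_eigenvectorBasis k⟩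
  intro h
  apply hM.eigenvectorBasis.orthonormal.ne_zero k
  ext j
  exact congrFun h j

lemma qf_le {M : Matrix (Fin n) (Fin n) ℝ} (hM : M.IsHermitian) {c : ℝ}
    (hc : ∀ k, hM.eigenvalues k ≤ c) (x : Fin n → ℝ) :
    x ⬝ᵥ (M *ᵥ x) ≤ c * (x ⬝ᵥ x) := by
  have h := (lemC hM hc).dotProduct_mulVec_nonneg x
  simp only [star_trivial, Matrix.sub_mulVec, smul_mulVec, one_mulVec,
    dotProduct_sub, dotProduct_smul, smul_eq_mul] at h
  linarith

lemma mem_set_le {M : Matrix (Fin n) (Fin n) ℝ} (hM : M.IsHermitian) {c : ℝ}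
    (hc : ∀ x : Fin n → ℝ, x ⬝ᵥ (M *ᵥ x) ≤ c * (x ⬝ᵥ x)) {μ : ℝ}
    (hμ : μ ∈ {μ : ℝ | ∃ v : Fin n → ℝ, v ≠ 0 ∧ M.mulVec v = μ • v}) : μ ≤ c := by
  obtain ⟨v, hv, heq⟩ := hμ
  have hvv : 0 < v ⬝ᵥ v :=
    lt_of_le_of_ne (Finset.sum_nonneg fun i _ => mul_self_nonneg _)
      (fun h => hv (dotProduct_self_eq_zero.mp h.symm))
  have h := hc v
  rw [heq, dotProduct_smul, smul_eq_mul] at h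
  exact le_of_mul_le_mul_right (by linarith) hvv

lemma bddAbove_eigset {M : Matrix (Fin n) (Fin n) ℝ} (hM : M.IsHermitian) :
    BddAbove {μ : ℝ | ∃ v : Fin n → ℝ, v ≠ 0 ∧ M.mulVec v = μ • v} := by
  rcases isEmpty_or_nonempty (Fin n) with h | h
  · exact ⟨0, fun μ hμ => absurd (Subsingleton.elim _ _) hμ.choose_spec.1⟩
  · refine ⟨Finset.univ.sup' ⟨h.some, Finset.mem_univ _⟩ hM.eigenvalues, fun μ hμ => ?_⟩
    exact mem_set_le hM (qf_le hM fun k => Finset.le_sup' _ (Finset.mem_univ k)) hμ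

lemma eig_le_lamMax {M : Matrix (Fin n) (Fin n) ℝ} (hM : M.IsHermitian) (k : Fin n) :
    hM.eigenvalues k ≤ lamMax M :=
  le_csSup (bddAbove_eigset hM) (eig_mem_set hM k)

noncomputable def Bmat (m n : ℕ) (A : Matrix (Fin m) (Fin n) ℝ) (J : Finset (Fin m)) :
    Matrix (Fin n) (Fin n) ℝ :=
  ∑ i ∈ J, ((A i ⬝ᵥ A i)⁻¹) • vecMulVec (A i) (A i)

noncomputable def Mmat (m n : ℕ) (A : Matrix (Fin m) (Fin n) ℝ) (w : Fin m → ℝ)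
    (J : Finset (Fin m)) : Matrix (Fin n) (Fin n) ℝ :=
  ∑ i ∈ J, (w i / (A i ⬝ᵥ A i)) • vecMulVec (A i) (A i)

lemma hW_lemma (m n : ℕ) (A : Matrix (Fin m) (Fin n) ℝ) (P : Finset (Fin m) → ℝ)
    (p : Fin m → ℝ)
    (hp : ∀ i, p i = ∑ J ∈ Finset.univ.filter (fun J : Finset (Fin m) => i ∈ J), P J) :
    ∑ i : Fin m, (p i / (A i ⬝ᵥ A i)) • vecMulVec (A i) (A i)
      = ∑ J : Finset (Fin m), P J • Bmat m n A J := by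
  classical
  have h1 : ∀ J : Finset (Fin m), P J • Bmat m n A J
      = ∑ i : Fin m, (if i ∈ J then P J * (A i ⬝ᵥ A i)⁻¹ else 0) • vecMulVec (A i) (A i) := by
    intro J
    rw [Bmat, Finset.smul_sum]
    rw [show (∑ i : Fin m, (if i ∈ J then P J * (A i ⬝ᵥ A i)⁻¹ else 0) • vecMulVec (A i) (A i))
        = ∑ i : Fin m, (if i ∈ J then (P J * (A i ⬝ᵥ A i)⁻¹) • vecMulVec (A i) (A i) else 0)
      from Finset.sum_congr rfl fun i _ => by split <;> simp]
    rw [← Finset.sum_filter, Finset.filter_univ_mem]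
    exact Finset.sum_congr rfl fun i _ => by rw [smul_smul]
  rw [Finset.sum_congr rfl fun J _ => h1 J, Finset.sum_comm]
  refine Finset.sum_congr rfl fun i _ => ?_
  rw [← Finset.sum_smul]
  congr 1
  rw [hp i, Finset.sum_filter, div_eq_mul_inv, Finset.sum_mul]
  exact Finset.sum_congr rfl fun J _ => by split <;> simp

theorem stmt8 (m n : ℕ) (A : Matrix (Fin m) (Fin n) ℝ) (hrows : ∀ i, A i ≠ 0)
    (P : Finset (Fin m) → ℝ) (hP : ∀ J, 0 ≤ P J) (hP1 : ∑ J : Finset (Fin m), P J = 1)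
    (p : Fin m → ℝ)
    (hp : ∀ i, p i = ∑ J ∈ Finset.univ.filter (fun J : Finset (Fin m) => i ∈ J), P J)
    (w : Fin m → ℝ) (wmin wmax : ℝ) (hwmin : 0 < wmin) (hwmax : wmax < 1)
    (hw : ∀ i, wmin ≤ w i ∧ w i ≤ wmax)
    (lb : ℝ)
    (hlb : lb = sSup {r : ℝ | ∃ J : Finset (Fin m), P J ≠ 0 ∧
      r = lamMax (∑ i ∈ J, ((A i ⬝ᵥ A i)⁻¹) • vecMulVec (A i) (A i))}) :
    ((wmax ^ 2 * lb) • (∑ i : Fin m, (p i / (A i ⬝ᵥ A i)) • vecMulVec (A i) (A i)) -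
      ∑ J : Finset (Fin m), P J •
        ((∑ i ∈ J, (w i / (A i ⬝ᵥ A i)) • vecMulVec (A i) (A i)) *
          (∑ i ∈ J, (w i / (A i ⬝ᵥ A i)) • vecMulVec (A i) (A i)))).PosSemidef := by
  classical
  rcases Nat.eq_zero_or_pos n with hn | hn
  · subst hn
    exact ⟨by ext i j; exact i.elim0, fun x => by simp [dotProduct]⟩
  rcases Nat.eq_zero_or_pos m with hm | hm
  · subst hm
    have hz : ∀ J : Finset (Fin 0),
        (∑ i ∈ J, (w i / (A i ⬝ᵥ A i)) • vecMulVec (A i) (A i)) = 0 := by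
      intro J
      rw [Finset.eq_empty_of_isEmpty J, Finset.sum_empty]
    simp only [Finset.univ_eq_empty, Finset.sum_empty, smul_zero, hz, mul_zero, zero_sub,
      Matrix.mul_zero]
    simpa using Matrix.PosSemidef.zero (n := Fin n) (R := ℝ)
  -- main case
  have hwmax0 : 0 < wmax := lt_of_lt_of_le hwmin ((hw ⟨0, hm⟩).1.trans (hw ⟨0, hm⟩).2)
  have hd : ∀ i, 0 < A i ⬝ᵥ A i := fun i =>
    lt_of_le_of_ne (Finset.sum_nonneg fun _ _ => mul_self_nonneg _)
      (fun h => hrows i (dotProduct_self_eq_zero.mp h.symm))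
  have hBpsd : ∀ J, (Bmat m n A J).PosSemidef := fun J =>
    psd_sum _ _ fun i _ => psd_smul (psd_vecMulVec _) (inv_nonneg.mpr (hd i).le)
  have hMpsd : ∀ J, (Mmat m n A w J).PosSemidef := fun J =>
    psd_sum _ _ fun i _ => psd_smul (psd_vecMulVec _)
      (div_nonneg (hwmin.le.trans (hw i).1) (hd i).le)
  have hdiffJ : ∀ J, (wmax • Bmat m n A J - Mmat m n A w J).PosSemidef := by
    intro J
    have heq : wmax • Bmat m n A J - Mmat m n A w J
        = ∑ i ∈ J, ((wmax - w i) * (A i ⬝ᵥ A i)⁻¹) • vecMulVec (A i) (A i) := by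
      rw [Bmat, Mmat, Finset.smul_sum, ← Finset.sum_sub_distrib]
      refine Finset.sum_congr rfl fun i _ => ?_
      rw [smul_smul, ← sub_smul, div_eq_mul_inv, ← sub_mul]
    rw [heq]
    exact psd_sum _ _ fun i _ => psd_smul (psd_vecMulVec _)
      (mul_nonneg (sub_nonneg.mpr (hw i).2) (inv_nonneg.mpr (hd i).le))
  -- lb bounds
  have hbddS : BddAbove {r : ℝ | ∃ J : Finset (Fin m), P J ≠ 0 ∧ r = lamMax (Bmat m n A J)} := by
    apply Set.Finite.bddAbove
    apply Set.Finite.subset (Set.finite_range (fun J => lamMax (Bmat m n A J)))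
    rintro r ⟨J, -, hr⟩
    exact ⟨J, hr.symm⟩
  have hlbJ : ∀ J, P J ≠ 0 → lamMax (Bmat m n A J) ≤ lb := by
    intro J hJ
    rw [hlb]
    exact le_csSup hbddS ⟨J, hJ, rfl⟩
  obtain ⟨J₀, -, hJ₀⟩ := Finset.exists_ne_zero_of_sum_ne_zero (hP1 ▸ one_ne_zero)
  have hlb0 : 0 ≤ lb := by
    refine le_trans ?_ (hlbJ J₀ hJ₀)
    refine le_trans ((hBpsd J₀).eigenvalues_nonneg ⟨0, hn⟩) (eig_le_lamMax _ _)
  -- key per-J PSD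
  have key : ∀ J, (P J • ((wmax ^ 2 * lb) • Bmat m n A J
      - Mmat m n A w J * Mmat m n A w J)).PosSemidef := by
    intro J
    by_cases hPJ : P J = 0
    · rw [hPJ, zero_smul]; exact Matrix.PosSemidef.zero
    refine psd_smul ?_ (hP J)
    have hqB : ∀ x : Fin n → ℝ, x ⬝ᵥ (Bmat m n A J *ᵥ x) ≤ lb * (x ⬝ᵥ x) :=
      qf_le (hBpsd J).1 fun k => le_trans (eig_le_lamMax _ k) (hlbJ J hPJ)
    have hMle : ∀ k, (hMpsd J).1.eigenvalues k ≤ wmax * lb := by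
      intro k
      refine mem_set_le (hMpsd J).1 (fun x => ?_) (eig_mem_set (hMpsd J).1 k)
      have h1 : x ⬝ᵥ (Mmat m n A w J *ᵥ x) ≤ wmax * (x ⬝ᵥ (Bmat m n A J *ᵥ x)) := by
        have h2 := (hdiffJ J).dotProduct_mulVec_nonneg x
        simp only [star_trivial, Matrix.sub_mulVec, smul_mulVec, dotProduct_sub,
          dotProduct_smul, smul_eq_mul] at h2
        linarith
      calc x ⬝ᵥ (Mmat m n A w J *ᵥ x) ≤ wmax * (x ⬝ᵥ (Bmat m n A J *ᵥ x)) := h1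
        _ ≤ wmax * (lb * (x ⬝ᵥ x)) := mul_le_mul_of_nonneg_left (hqB x) hwmax0.le
        _ = wmax * lb * (x ⬝ᵥ x) := by ring
    have h2 : ((wmax * lb) • Mmat m n A w J - Mmat m n A w J * Mmat m n A w J).PosSemidef :=
      lemL2 (hMpsd J).1 (hMpsd J).eigenvalues_nonneg hMle
    have h3 : ((wmax * lb) • (wmax • Bmat m n A J - Mmat m n A w J)).PosSemidef :=
      psd_smul (hdiffJ J) (mul_nonneg hwmax0.le hlb0)
    have combine : (wmax ^ 2 * lb) • Bmat m n A J - Mmat m n A w J * Mmat m n A w J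
        = (wmax * lb) • (wmax • Bmat m n A J - Mmat m n A w J)
          + ((wmax * lb) • Mmat m n A w J - Mmat m n A w J * Mmat m n A w J) := by
      rw [smul_sub, smul_smul]
      module
    rw [combine]
    exact h3.add h2
  -- assemble
  have hW := hW_lemma m n A P p hp
  have main : (wmax ^ 2 * lb) • (∑ i : Fin m, (p i / (A i ⬝ᵥ A i)) • vecMulVec (A i) (A i)) -
      ∑ J : Finset (Fin m), P J • (Mmat m n A w J * Mmat m n A w J)
      = ∑ J : Finset (Fin m), P J • ((wmax ^ 2 * lb) • Bmat m n A J
          - Mmat m n A w J * Mmat m n A w J) := by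
    rw [hW, Finset.smul_sum, ← Finset.sum_sub_distrib]
    refine Finset.sum_congr rfl fun J _ => ?_
    rw [smul_sub, smul_comm]
  show ((wmax ^ 2 * lb) • (∑ i : Fin m, (p i / (A i ⬝ᵥ A i)) • vecMulVec (A i) (A i)) -
      ∑ J : Finset (Fin m), P J • (Mmat m n A w J * Mmat m n A w J)).PosSemidef
  rw [main]
  exact psd_sum _ _ fun J _ => key J
end

section
/- For the one-step recursion of RBK with uniform weights 1/τ, normalized rows, and a sampling with p_i = τ/m for all i, the conditional expectation satisfies E[x^{k+1} − x* | x^k] = (I_n − (α_k/m)·AᵀA)(x^k − x*) for any solution x* of Ax = b. -/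
open Matrix Finset

theorem stmt14 (m n τ : ℕ) (hm : 0 < m) (hτ : 0 < τ)
    (A : Matrix (Fin m) (Fin n) ℝ) (hnorm : ∀ i, A i ⬝ᵥ A i = 1)
    (b : Fin m → ℝ) (xstar : Fin n → ℝ) (hxs : A.mulVec xstar = b)
    (P : Finset (Fin m) → ℝ) (hP : ∀ J, 0 ≤ P J) (hP1 : ∑ J : Finset (Fin m), P J = 1)
    (hp : ∀ i : Fin m,
      (∑ J ∈ Finset.univ.filter (fun J : Finset (Fin m) => i ∈ J), P J) = (τ : ℝ) / m)
    (α : ℝ) (x : Fin n → ℝ) :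
    (∑ J : Finset (Fin m), P J •
        ((x - (α / τ) • ∑ i ∈ J, (A i ⬝ᵥ x - b i) • A i) - xstar))
      = (x - xstar) - (α / m) • (Aᵀ * A).mulVec (x - xstar) := by
  have hb : ∀ i, A i ⬝ᵥ x - b i = A i ⬝ᵥ (x - xstar) := by
    intro i
    rw [← hxs, dotProduct_sub]
    rfl
  have hATA : (Aᵀ * A).mulVec (x - xstar) = ∑ i, (A i ⬝ᵥ (x - xstar)) • A i := by
    funext j
    simp only [mulVec, dotProduct, Matrix.mul_apply, transpose_apply,
      Finset.sum_apply, Pi.smul_apply, smul_eq_mul]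
    simp only [Finset.sum_mul]
    rw [Finset.sum_comm]
    exact Finset.sum_congr rfl fun i _ => Finset.sum_congr rfl fun k _ => by ring
  have key : (∑ J : Finset (Fin m), P J • ∑ i ∈ J, (A i ⬝ᵥ x - b i) • A i)
      = ((τ : ℝ) / m) • ∑ i, (A i ⬝ᵥ (x - xstar)) • A i := by
    have : ∀ J : Finset (Fin m), P J • ∑ i ∈ J, (A i ⬝ᵥ x - b i) • A i
        = ∑ i : Fin m, (if i ∈ J then P J • ((A i ⬝ᵥ (x - xstar)) • A i) else 0) := by
      intro J
      rw [Finset.smul_sum, ← Finset.sum_filter]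
      simp only [Finset.filter_mem_eq_inter, Finset.univ_inter]
      congr 1; funext i; rw [hb]
    simp only [this]
    rw [Finset.sum_comm, Finset.smul_sum]
    congr 1; funext i
    rw [← Finset.sum_filter, ← Finset.sum_smul, hp i]
  calc (∑ J : Finset (Fin m), P J •
        ((x - (α / τ) • ∑ i ∈ J, (A i ⬝ᵥ x - b i) • A i) - xstar))
      = (∑ J : Finset (Fin m), P J • (x - xstar))
        - (α / τ) • (∑ J : Finset (Fin m), P J • ∑ i ∈ J, (A i ⬝ᵥ x - b i) • A i) := by
        rw [Finset.smul_sum, ← Finset.sum_sub_distrib]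
        congr 1; funext J
        rw [smul_comm]
        simp only [smul_sub, sub_smul]
        abel
    _ = (x - xstar) - (α / m) • (Aᵀ * A).mulVec (x - xstar) := by
        rw [← Finset.sum_smul, hP1, one_smul, key, hATA, smul_smul]
        congr 2
        field_simp
end

section
/- Let 0 < ℓ < u and G symmetric with spectrum in [ℓ, u]. For the Chebyshev-based product P_k(G) = Π_{j=0}^{k−1}(I − α_j G) with stepsizes α_j⁻¹ = ((u+ℓ) + (u−ℓ)cos((2j+1)π/(2k)))/2, the spectral norm satisfies ‖P_k(G)‖ ≤ 2·((√u − √ℓ)/(√u + √ℓ))^k. -/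
open Matrix Finset Real

section ChebyshevAux

open Polynomial Polynomial.Chebyshev

lemma Tdeg : ∀ n : ℕ, (T ℝ n).natDegree = n ∧ (T ℝ n).leadingCoeff = 2 ^ (n - 1) := by
  intro n
  induction n using Nat.strong_induction_on with
  | _ n ih =>
    match n with
    | 0 => simp [T_zero]
    | 1 => simp [T_one]
    | (m + 2) =>
      have h1 := ih (m + 1) (by omega)
      have h0 := ih m (by omega)
      have hT : T ℝ ((m:ℤ) + 2) = 2 * X * T ℝ ((m:ℤ) + 1) - T ℝ (m:ℤ) := T_add_two ℝ m
      have hcast : ((m + 2 : ℕ) : ℤ) = (m : ℤ) + 2 := by push_cast; ring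
      have hcast1 : ((m + 1 : ℕ) : ℤ) = (m : ℤ) + 1 := by push_cast; ring
      rw [hcast, hT]
      have hne : T ℝ ((m:ℤ) + 1) ≠ 0 := by
        intro h
        have h2 := h1.2
        rw [← hcast1] at h
        rw [h, Polynomial.leadingCoeff_zero] at h2
        exact absurd h2.symm (by positivity)
      have hXne : (2 * X : ℝ[X]) ≠ 0 := by
        intro h
        have := congrArg (Polynomial.coeff · 1) h
        simp at this
      have hdeg2X : (2 * X : ℝ[X]).natDegree = 1 := by
        simp [Polynomial.natDegree_mul (by norm_num : (2:ℝ[X]) ≠ 0) (Polynomial.X_ne_zero)]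
      have hlc2X : (2 * X : ℝ[X]).leadingCoeff = 2 := by
        rw [show (2 * X : ℝ[X]) = Polynomial.C 2 * X from by rw [map_ofNat Polynomial.C 2]]
        simp [Polynomial.leadingCoeff_mul]
      have hdmul : (2 * X * T ℝ ((m:ℤ) + 1)).natDegree = m + 2 := by
        rw [Polynomial.natDegree_mul hXne hne, hdeg2X, ← hcast1, h1.1]
        omega
      have hlcmul : (2 * X * T ℝ ((m:ℤ) + 1)).leadingCoeff = 2 ^ (m + 1) := by
        rw [Polynomial.leadingCoeff_mul, hlc2X, ← hcast1, h1.2, Nat.add_sub_cancel, pow_succ]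
        ring
      have hdeglt : (T ℝ (m:ℤ)).degree < (2 * X * T ℝ ((m:ℤ) + 1)).degree := by
        apply Polynomial.degree_lt_degree
        rw [hdmul]
        have : (T ℝ ((m:ℕ):ℤ)).natDegree = m := h0.1
        omega
      have hndlt : (T ℝ (m:ℤ)).natDegree < (2 * X * T ℝ ((m:ℤ) + 1)).natDegree := by
        rw [hdmul]
        have : (T ℝ ((m:ℕ):ℤ)).natDegree = m := h0.1
        omega
      constructor
      · rw [Polynomial.natDegree_sub_eq_left_of_natDegree_lt hndlt, hdmul]
      · rw [Polynomial.leadingCoeff_sub_of_degree_lt hdeglt, hlcmul]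
        congr 1

lemma theta_mem {k : ℕ} (hk : 0 < k) (j : ℕ) (hj : j < k) :
    (2*(j:ℝ)+1)*Real.pi/(2*k) ∈ Set.Icc 0 Real.pi := by
  have hπ := Real.pi_pos
  constructor
  · positivity
  · rw [div_le_iff₀ (by positivity)]
    have : (2*(j:ℝ)+1) ≤ 2*k := by
      have : (j:ℝ) + 1 ≤ k := by exact_mod_cast hj
      linarith
    nlinarith

lemma theta_inj {k : ℕ} (hk : 0 < k) : ∀ j1 j2 : Fin k,
    Real.cos ((2*(j1:ℝ)+1)*Real.pi/(2*k)) = Real.cos ((2*(j2:ℝ)+1)*Real.pi/(2*k)) → j1 = j2 := by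
  intro j1 j2 h
  have h1 := theta_mem hk j1 j1.2
  have h2 := theta_mem hk j2 j2.2
  have := Real.injOn_cos h1 h2 h
  have hπ := Real.pi_ne_zero
  have hk' : (k:ℝ) ≠ 0 := Nat.cast_ne_zero.mpr hk.ne'
  field_simp at this
  have : (j1:ℝ) = j2 := by linarith
  exact Fin.ext (by exact_mod_cast this)

lemma T_root {k : ℕ} (hk : 0 < k) (j : ℕ) (hj : j < k) :
    (T ℝ k).eval (Real.cos ((2*(j:ℝ)+1)*Real.pi/(2*k))) = 0 := by
  rw [T_real_cos]
  have hk' : (k:ℝ) ≠ 0 := Nat.cast_ne_zero.mpr hk.ne'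
  have : ((k:ℤ):ℝ) * ((2*(j:ℝ)+1)*Real.pi/(2*k)) = (2*(j:ℤ)+1)*Real.pi/2 := by
    push_cast
    field_simp
  rw [this]
  exact Real.cos_eq_zero_iff.mpr ⟨j, by push_cast; ring⟩

lemma Tfact {k : ℕ} (hk : 0 < k) (x : ℝ) :
    (T ℝ k).eval x =
      2^(k-1) * ∏ j ∈ Finset.range k, (x - Real.cos ((2*(j:ℝ)+1)*Real.pi/(2*k))) := by
  set c : ℕ → ℝ := fun j => Real.cos ((2*(j:ℝ)+1)*Real.pi/(2*k)) with hc
  set Q : ℝ[X] := C (2^(k-1) : ℝ) * ∏ j ∈ Finset.range k, (X - C (c j)) with hQ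
  have hmon : (∏ j ∈ Finset.range k, (X - C (c j)) : ℝ[X]).Monic :=
    monic_prod_of_monic _ _ (fun j _ => monic_X_sub_C _)
  have hprodnd : (∏ j ∈ Finset.range k, (X - C (c j)) : ℝ[X]).natDegree = k := by
    rw [natDegree_prod _ _ (fun j _ => X_sub_C_ne_zero _)]
    simp
  have hc0 : (2^(k-1) : ℝ) ≠ 0 := by positivity
  have hQnd : Q.natDegree = k := by rw [hQ, natDegree_C_mul hc0, hprodnd]
  have hQlc : Q.leadingCoeff = 2^(k-1) := by
    rw [hQ, leadingCoeff_mul, leadingCoeff_C, hmon.leadingCoeff, mul_one]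
  have hTnd : (T ℝ k).natDegree = k := (Tdeg k).1
  have hTlc : (T ℝ k).leadingCoeff = 2^(k-1) := (Tdeg k).2
  have hTne : (T ℝ (k:ℤ)) ≠ 0 := by
    intro h; rw [h, leadingCoeff_zero] at hTlc; exact hc0 hTlc.symm
  have hQne : Q ≠ 0 := by
    intro h; rw [h, leadingCoeff_zero] at hQlc; exact hc0 hQlc.symm
  have hdegeq : (T ℝ (k:ℤ)).degree = Q.degree := by
    rw [degree_eq_natDegree hTne, degree_eq_natDegree hQne, hTnd, hQnd]
  have hkey : T ℝ (k:ℤ) - Q = 0 := by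
    by_cases hz : T ℝ (k:ℤ) - Q = 0
    · exact hz
    · have hdlt : (T ℝ (k:ℤ) - Q).degree < (T ℝ (k:ℤ)).degree :=
        degree_sub_lt hdegeq hTne (hTlc.trans hQlc.symm)
      refine eq_zero_of_natDegree_lt_card_of_eval_eq_zero (T ℝ (k:ℤ) - Q)
        (f := fun j : Fin k => c j) (fun j1 j2 h => theta_inj hk j1 j2 h) ?_ ?_
      · intro i
        rw [eval_sub, T_root hk i i.2, hQ]
        simp only [eval_mul, eval_prod, eval_sub, eval_X, eval_C]
        rw [Finset.prod_eq_zero (Finset.mem_range.mpr i.2) (by simp)]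
        ring
      · rw [Fintype.card_fin]
        have : (T ℝ (k:ℤ) - Q).natDegree < (T ℝ (k:ℤ)).natDegree := by
          rw [← natDegree_lt_natDegree_iff hz] at hdlt
          exact hdlt
        omega
  have := sub_eq_zero.mp hkey
  rw [this, hQ]
  simp only [eval_mul, eval_prod, eval_sub, eval_X, eval_C]
  rfl

lemma T_abs_le (k : ℕ) (x : ℝ) (hx : x ∈ Set.Icc (-1:ℝ) 1) :
    |(T ℝ k).eval x| ≤ 1 := by
  rw [← Real.cos_arccos hx.1 hx.2, T_real_cos]
  exact Real.abs_cos_le_one _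

lemma T_eval_neg_cosh (k : ℕ) (t : ℝ) :
    (T ℝ k).eval (-(Real.cosh t)) = (-1)^k * Real.cosh (k*t) := by
  have h : ((-(Real.cosh t) : ℝ) : ℂ) = Complex.cos ((t*Complex.I) + Real.pi) := by
    rw [Complex.cos_add_pi, Complex.cos_mul_I, ← Complex.ofReal_cosh]
    push_cast; ring
  have hmain : (((T ℝ (k:ℤ)).eval (-(Real.cosh t)) : ℝ) : ℂ)
      = (((-1)^k * Real.cosh (k*t) : ℝ) : ℂ) := by
    rw [complex_ofReal_eval_T, h, T_complex_cos]
    have harg : ((k:ℤ):ℂ) * ((t*Complex.I) + Real.pi)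
        = ((k*t:ℝ):ℂ) * Complex.I + (k:ℕ) * (Real.pi:ℂ) := by push_cast; ring
    rw [harg, Complex.cos_antiperiodic.add_nat_mul_eq, Complex.cos_mul_I,
      ← Complex.ofReal_cosh]
    push_cast; ring
  exact_mod_cast hmain

lemma scalar_bound (k : ℕ) (hk : 0 < k) (ℓ u : ℝ) (hℓ : 0 < ℓ) (hlu : ℓ < u)
    (α : ℕ → ℝ)
    (hα : ∀ j < k, α j = 2 / ((u + ℓ) + (u - ℓ) * Real.cos ((2*(j:ℝ)+1)*Real.pi/(2*k))))
    (μ : ℝ) (hμ : μ ∈ Set.Icc ℓ u) :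
    |∏ j ∈ Finset.range k, (1 - α j * μ)| ≤
      2 * ((Real.sqrt u - Real.sqrt ℓ)/(Real.sqrt u + Real.sqrt ℓ))^k := by
  have hu : 0 < u := hℓ.trans hlu
  have hw : 0 < u - ℓ := by linarith
  have hsl : 0 < Real.sqrt ℓ := Real.sqrt_pos.mpr hℓ
  have hss : Real.sqrt ℓ < Real.sqrt u := Real.sqrt_lt_sqrt hℓ.le hlu
  have hsqu : Real.sqrt u ^ 2 = u := Real.sq_sqrt hu.le
  have hsql : Real.sqrt ℓ ^ 2 = ℓ := Real.sq_sqrt hℓ.le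
  set z : ℝ := (Real.sqrt u + Real.sqrt ℓ)/(Real.sqrt u - Real.sqrt ℓ) with hz
  have hzpos : 0 < z := div_pos (by positivity) (by linarith)
  set t : ℝ := Real.log z with ht
  set c : ℝ := (u+ℓ)/(u-ℓ) with hc
  set x : ℝ := (2*μ-u-ℓ)/(u-ℓ) with hx
  have hcosh : Real.cosh t = c := by
    rw [ht, Real.cosh_eq, Real.exp_log hzpos, Real.exp_neg, Real.exp_log hzpos, hz, hc]
    rw [inv_div]
    have h1 : Real.sqrt u + Real.sqrt ℓ ≠ 0 := by positivity
    have h2 : Real.sqrt u - Real.sqrt ℓ ≠ 0 := by linarith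
    field_simp
    nlinarith [hsqu, hsql]
  set cj : ℕ → ℝ := fun j => Real.cos ((2*(j:ℝ)+1)*Real.pi/(2*k)) with hcj
  have hcjb : ∀ j, -1 ≤ cj j ∧ cj j ≤ 1 := fun j => ⟨Real.neg_one_le_cos _, Real.cos_le_one _⟩
  have hccpos : ∀ j, 0 < cj j + c := by
    intro j
    have := (hcjb j).1
    have : (0:ℝ) < 2*ℓ/(u-ℓ) := by positivity
    have hc1 : 1 < c := by rw [hc, lt_div_iff₀ hw]; linarith
    linarith [(hcjb j).1]
  have e1 : ∀ j ∈ Finset.range k, (1 - α j * μ) = (cj j - x) / (cj j + c) := by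
    intro j hj
    have hD : (0:ℝ) < u + ℓ + (u - ℓ) * cj j := by nlinarith [(hcjb j).1]
    have h1 : cj j + c = (u + ℓ + (u - ℓ) * cj j) / (u - ℓ) := by
      rw [hc]; field_simp; ring
    have h2 : cj j - x = (u + ℓ + (u - ℓ) * cj j - 2*μ) / (u - ℓ) := by
      rw [hx]; field_simp; ring
    rw [hα j (Finset.mem_range.mp hj),
      show Real.cos ((2*(j:ℝ)+1)*Real.pi/(2*(k:ℝ))) = cj j from rfl,
      h1, h2, div_div_div_cancel_right₀]
    · field_simp [hD.ne']
    · exact hw.ne'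
  rw [Finset.prod_congr rfl e1, Finset.prod_div_distrib]
  have hnum : ∏ j ∈ Finset.range k, (cj j - x)
      = (-1)^k * ((T ℝ k).eval x / 2^(k-1)) := by
    have : ∀ j ∈ Finset.range k, cj j - x = (-1) * (x - cj j) := by intro j _; ring
    rw [Finset.prod_congr rfl this, Finset.prod_mul_distrib, Finset.prod_const,
      Finset.card_range, Tfact hk x]
    field_simp
    rfl
  have hden : ∏ j ∈ Finset.range k, (cj j + c)
      = (-1)^k * ((T ℝ k).eval (-c) / 2^(k-1)) := by
    have : ∀ j ∈ Finset.range k, cj j + c = (-1) * ((-c) - cj j) := by intro j _; ring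
    rw [Finset.prod_congr rfl this, Finset.prod_mul_distrib, Finset.prod_const,
      Finset.card_range, Tfact hk (-c)]
    field_simp
    rfl
  have hTc : (T ℝ k).eval (-c) = (-1)^k * Real.cosh (k*t) := by
    rw [← hcosh, T_eval_neg_cosh k t]
  have hch1 : (1:ℝ) ≤ Real.cosh (k*t) := Real.one_le_cosh _
  have hratio : (∏ j ∈ Finset.range k, (cj j - x)) / (∏ j ∈ Finset.range k, (cj j + c))
      = (T ℝ k).eval x / ((-1)^k * Real.cosh (k*t)) := by
    rw [hnum, hden, hTc]
    have h2k : ((2:ℝ))^(k-1) ≠ 0 := by positivity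
    have hm1 : ((-1:ℝ))^k ≠ 0 := by
      intro h; have := pow_eq_zero_iff (n := k) (by omega) |>.mp h; norm_num at this
    field_simp
  rw [hratio]
  have hxmem : x ∈ Set.Icc (-1:ℝ) 1 := by
    constructor
    · rw [hx, le_div_iff₀ hw]; linarith [hμ.1]
    · rw [hx, div_le_iff₀ hw]; linarith [hμ.2]
  have habs : |(T ℝ k).eval x / ((-1)^k * Real.cosh (k*t))|
      = |(T ℝ k).eval x| / Real.cosh (k*t) := by
    rw [abs_div, abs_mul, abs_pow, abs_neg, abs_one, one_pow, one_mul,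
      abs_of_pos (by linarith : (0:ℝ) < Real.cosh (k*t))]
  rw [habs]
  have hcoshge : z^k / 2 ≤ Real.cosh (k*t) := by
    rw [Real.cosh_eq]
    have : Real.exp (k*t) = z^k := by
      rw [ht, Real.exp_nat_mul, Real.exp_log hzpos]
    rw [this]
    have : 0 < Real.exp (-(k*t)) := Real.exp_pos _
    linarith
  have hzk : (0:ℝ) < z^k := pow_pos hzpos k
  calc |(T ℝ k).eval x| / Real.cosh (k*t) ≤ 1 / Real.cosh (k*t) := by
        rw [div_le_div_iff_of_pos_right (by linarith : (0:ℝ) < Real.cosh (k*t))]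
        exact T_abs_le k x hxmem
    _ ≤ 1 / (z^k/2) := by
        apply one_div_le_one_div_of_le (by positivity) hcoshge
    _ = 2 * ((Real.sqrt u - Real.sqrt ℓ)/(Real.sqrt u + Real.sqrt ℓ))^k := by
        rw [show (Real.sqrt u - Real.sqrt ℓ)/(Real.sqrt u + Real.sqrt ℓ) = z⁻¹ by
          rw [hz, inv_div], inv_pow]
        field_simp

end ChebyshevAux

open Polynomial Polynomial.Chebyshev in
theorem stmt15 (msz k : ℕ) (hk : 0 < k) (ℓ u : ℝ) (hℓ : 0 < ℓ) (hlu : ℓ < u)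
    (G : Matrix (Fin msz) (Fin msz) ℝ) (hG : G.IsSymm)
    (hspec : ∀ μ : ℝ, (∃ v : Fin msz → ℝ, v ≠ 0 ∧ G.mulVec v = μ • v) →
      μ ∈ Set.Icc ℓ u)
    (α : ℕ → ℝ)
    (hα : ∀ j < k, α j =
      2 / ((u + ℓ) + (u - ℓ) * Real.cos ((2 * j + 1) * Real.pi / (2 * k))))
    (Pm : Matrix (Fin msz) (Fin msz) ℝ)
    (hPm : Pm = ((List.range k).map
      (fun j => (1 : Matrix (Fin msz) (Fin msz) ℝ) - α j • G)).prod)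
    (v : Fin msz → ℝ) :
    (Pm.mulVec v) ⬝ᵥ (Pm.mulVec v) ≤
      (2 * ((Real.sqrt u - Real.sqrt ℓ) / (Real.sqrt u + Real.sqrt ℓ)) ^ k) ^ 2 *
        (v ⬝ᵥ v) := by
  have hA : G.IsHermitian := by
    rw [Matrix.IsHermitian, Matrix.conjTranspose]
    have hG' : Gᵀ = G := hG
    ext i j
    have h := congrArg (fun M : Matrix (Fin msz) (Fin msz) ℝ => M i j) hG'
    simpa using h
  set U : Matrix (Fin msz) (Fin msz) ℝ := (hA.eigenvectorUnitary : Matrix (Fin msz) (Fin msz) ℝ)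
    with hU
  have hUU : star U * U = 1 := Matrix.mem_unitaryGroup_iff'.mp hA.eigenvectorUnitary.2
  have hUU' : U * star U = 1 := Matrix.mem_unitaryGroup_iff.mp hA.eigenvectorUnitary.2
  set μ : Fin msz → ℝ := hA.eigenvalues with hμdef
  have hGdiag : G = U * Matrix.diagonal μ * star U := by
    have := hA.spectral_theorem
    simpa using this
  have hμmem : ∀ i, μ i ∈ Set.Icc ℓ u := by
    intro i
    apply hspec
    refine ⟨⇑(hA.eigenvectorBasis i), ?_, hA.mulVec_eigenvectorBasis i⟩
    intro h
    have h0 : hA.eigenvectorBasis i = 0 := by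
      ext j
      exact congrFun h j
    exact hA.eigenvectorBasis.orthonormal.ne_zero i h0
  -- diagonalization of the product
  set d : Fin msz → ℝ := fun i => ∏ j ∈ Finset.range k, (1 - α j * μ i) with hd
  have hPdiag : ∀ m : ℕ, ((List.range m).map
      (fun j => (1 : Matrix (Fin msz) (Fin msz) ℝ) - α j • G)).prod
      = U * Matrix.diagonal (fun i => ∏ j ∈ Finset.range m, (1 - α j * μ i)) * star U := by
    intro m
    induction m with
    | zero => simp [hUU']
    | succ m ih =>
      rw [List.range_succ, List.map_append, List.prod_append, ih]
      simp only [List.map_cons, List.map_nil, List.prod_cons, List.prod_nil, mul_one]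
      have hsmul : ∀ a : ℝ, a • G = U * Matrix.diagonal (fun i => a * μ i) * star U := by
        intro a
        rw [hGdiag, show (fun i => a * μ i) = a • μ from rfl, Matrix.diagonal_smul,
          Matrix.mul_smul, Matrix.smul_mul]
      have hfac : (1 : Matrix (Fin msz) (Fin msz) ℝ) - α m • G
          = U * Matrix.diagonal (fun i => 1 - α m * μ i) * star U := by
        rw [hsmul (α m), show Matrix.diagonal (fun i => 1 - α m * μ i)
            = Matrix.diagonal (fun _ => (1:ℝ)) - Matrix.diagonal (fun i => α m * μ i) from by
          rw [Matrix.diagonal_sub],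
          Matrix.mul_sub, Matrix.sub_mul, show Matrix.diagonal (fun _ => (1:ℝ)) = 1 from
          Matrix.diagonal_one, mul_one, hUU']
      have hmul : ∀ a b : Fin msz → ℝ,
          (U * Matrix.diagonal a * star U) * (U * Matrix.diagonal b * star U)
          = U * Matrix.diagonal (fun i => a i * b i) * star U := by
        intro a b
        simp only [Matrix.mul_assoc]
        rw [← Matrix.mul_assoc (star U) U, hUU, Matrix.one_mul,
          ← Matrix.mul_assoc (Matrix.diagonal a), Matrix.diagonal_mul_diagonal]
      have hstep : (fun i => (∏ j ∈ Finset.range m, (1 - α j * μ i)) * (1 - α m * μ i))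
          = fun i => ∏ j ∈ Finset.range (m+1), (1 - α j * μ i) := by
        funext i; rw [Finset.prod_range_succ]
      rw [hfac, hmul, hstep]
  have hPm' : Pm = U * Matrix.diagonal d * star U := by rw [hPm, hPdiag k]
  -- orthogonality preserves dot products
  have hdot : ∀ (A : Matrix (Fin msz) (Fin msz) ℝ), Aᵀ * A = 1 →
      ∀ x : Fin msz → ℝ, (A *ᵥ x) ⬝ᵥ (A *ᵥ x) = x ⬝ᵥ x := by
    intro A hAo x
    rw [Matrix.dotProduct_mulVec, ← Matrix.mulVec_transpose, Matrix.mulVec_mulVec, hAo,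
      Matrix.one_mulVec]
  have hstar : star U = Uᵀ := by
    rw [Matrix.star_eq_conjTranspose]
    rfl
  set ρ : ℝ := (Real.sqrt u - Real.sqrt ℓ) / (Real.sqrt u + Real.sqrt ℓ) with hρ
  have hdabs : ∀ i, |d i| ≤ 2 * ρ ^ k := by
    intro i
    exact scalar_bound k hk ℓ u hℓ hlu α hα (μ i) (hμmem i)
  set w : Fin msz → ℝ := Uᵀ *ᵥ v with hw
  have hPv : Pm *ᵥ v = U *ᵥ (Matrix.diagonal d *ᵥ w) := by
    rw [hPm', hstar, hw, ← Matrix.mulVec_mulVec, ← Matrix.mulVec_mulVec]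
  have hUtU : Uᵀ * U = 1 := by rw [← hstar]; exact hUU
  have hUUt : (Uᵀ)ᵀ * Uᵀ = 1 := by rw [Matrix.transpose_transpose, ← hstar]; exact hUU'
  rw [hPv, hdot U hUtU]
  have hww : w ⬝ᵥ w = v ⬝ᵥ v := hdot Uᵀ hUUt v
  have hdv : (Matrix.diagonal d *ᵥ w) ⬝ᵥ (Matrix.diagonal d *ᵥ w)
      = ∑ i, (d i * w i) * (d i * w i) := by
    simp [dotProduct, Matrix.mulVec_diagonal]
  rw [hdv]
  have hle : ∑ i, (d i * w i) * (d i * w i) ≤ ∑ i, (2 * ρ ^ k)^2 * (w i * w i) := by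
    apply Finset.sum_le_sum
    intro i _
    have h1 : (d i)^2 ≤ (2 * ρ ^ k)^2 := by
      have := hdabs i
      have := abs_le.mp this
      nlinarith [abs_nonneg (d i)]
    nlinarith [mul_self_nonneg (w i)]
  calc ∑ i, (d i * w i) * (d i * w i) ≤ ∑ i, (2 * ρ ^ k)^2 * (w i * w i) := hle
    _ = (2 * ρ ^ k)^2 * (w ⬝ᵥ w) := by rw [← Finset.mul_sum]; rfl
    _ = (2 * ρ ^ k)^2 * (v ⬝ᵥ v) := by rw [hww]
end

section
/- Among all real polynomials P of degree k with P(0) = 1, the minimum over P of max_{x∈[ℓ,u]}|P(x)| (for 0 < ℓ < u) equals 1/T_k^{(ℓ,u)}(0), achieved by P*(x) = T_k^{(ℓ,u)}(x)/T_k^{(ℓ,u)}(0), and this minimum is at most 2·((√u−√ℓ)/(√u+√ℓ))^k, where T_k^{(ℓ,u)}(x) = T_k((2x)/(u−ℓ) − (u+ℓ)/(u−ℓ)). -/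
open Polynomial Real

lemma myT_cosh (t : ℝ) : ∀ n : ℕ, (Polynomial.Chebyshev.T ℝ (n : ℤ)).eval (Real.cosh t) = Real.cosh (n * t) := by
  have key : ∀ n : ℕ, (Polynomial.Chebyshev.T ℝ (n : ℤ)).eval (Real.cosh t) = Real.cosh (n * t) ∧
      (Polynomial.Chebyshev.T ℝ ((n : ℤ) + 1)).eval (Real.cosh t) = Real.cosh ((n + 1) * t) := by
    intro n
    induction n with
    | zero => simp [Polynomial.Chebyshev.T_zero, Polynomial.Chebyshev.T_one]
    | succ n ih =>
      refine ⟨by push_cast; exact ih.2, ?_⟩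
      push_cast
      have e : ((n : ℤ) + 1 + 1) = (n : ℤ) + 2 := by ring
      rw [e, Polynomial.Chebyshev.T_add_two ℝ (n : ℤ)]
      have hc : Real.cosh (((n:ℝ) + 2) * t) = 2 * Real.cosh t * Real.cosh (((n:ℝ)+1) * t) - Real.cosh ((n:ℝ) * t) := by
        have e1 := Real.cosh_add (((n:ℝ)+1) * t) t
        have e2 := Real.cosh_sub (((n:ℝ)+1) * t) t
        have f1 : ((n:ℝ) + 2) * t = ((n:ℝ)+1)*t + t := by ring
        have f2 : (n:ℝ) * t = ((n:ℝ)+1)*t - t := by ring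
        rw [f1, f2]
        linarith
      simp only [Polynomial.eval_sub, Polynomial.eval_mul, Polynomial.eval_ofNat, Polynomial.eval_X]
      rw [ih.1, ih.2]
      have : (n:ℝ) + 1 + 1 = (n:ℝ) + 2 := by ring
      rw [this, hc]
  exact fun n => (key n).1

lemma myT_neg : ∀ n : ℕ, ∀ x : ℝ, (Polynomial.Chebyshev.T ℝ (n : ℤ)).eval (-x) = (-1)^n * (Polynomial.Chebyshev.T ℝ (n : ℤ)).eval x := by
  have key : ∀ n : ℕ, ∀ x : ℝ, ((Polynomial.Chebyshev.T ℝ (n : ℤ)).eval (-x) = (-1)^n * (Polynomial.Chebyshev.T ℝ (n : ℤ)).eval x ∧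
      (Polynomial.Chebyshev.T ℝ ((n : ℤ) + 1)).eval (-x) = (-1)^(n+1) * (Polynomial.Chebyshev.T ℝ ((n : ℤ)+1)).eval x) := by
    intro n
    induction n with
    | zero => intro x; simp [Polynomial.Chebyshev.T_zero, Polynomial.Chebyshev.T_one]
    | succ n ih =>
      intro x
      refine ⟨by push_cast; exact (ih x).2, ?_⟩
      push_cast
      have e : ((n:ℤ) + 1 + 1) = (n : ℤ) + 2 := by ring
      rw [e, Polynomial.Chebyshev.T_add_two ℝ (n : ℤ)]
      simp only [Polynomial.eval_sub, Polynomial.eval_mul, Polynomial.eval_ofNat, Polynomial.eval_X]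
      rw [(ih x).1, (ih x).2]
      ring
  exact fun n x => (key n x).1

lemma myT_natDegree_le : ∀ n : ℕ, (Polynomial.Chebyshev.T ℝ (n : ℤ)).natDegree ≤ n := by
  have key : ∀ n : ℕ, (Polynomial.Chebyshev.T ℝ (n : ℤ)).natDegree ≤ n ∧
      (Polynomial.Chebyshev.T ℝ ((n : ℤ)+1)).natDegree ≤ n + 1 := by
    intro n
    induction n with
    | zero => simp [Polynomial.Chebyshev.T_zero, Polynomial.Chebyshev.T_one]
    | succ n ih =>
      refine ⟨by push_cast; exact ih.2, ?_⟩
      push_cast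
      have e : ((n:ℤ) + 1 + 1) = (n : ℤ) + 2 := by ring
      rw [e, Polynomial.Chebyshev.T_add_two ℝ (n : ℤ)]
      refine le_trans (Polynomial.natDegree_sub_le _ _) ?_
      refine max_le ?_ (le_trans ih.1 (by omega))
      refine le_trans (Polynomial.natDegree_mul_le) ?_
      have h1 : ((2 : ℝ[X]) * X).natDegree ≤ 1 :=
        le_trans Polynomial.natDegree_mul_le (by simp)
      omega
  exact fun n => (key n).1

lemma myT_coeff : ∀ n : ℕ, (Polynomial.Chebyshev.T ℝ ((n : ℤ)+1)).coeff (n+1) = 2^n := by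
  intro n
  induction n using Nat.twoStepInduction with
  | zero => simp [Polynomial.Chebyshev.T_one]
  | one => norm_num [Polynomial.Chebyshev.T_two, Polynomial.coeff_sub, Polynomial.coeff_one]
  | more n ih ih2 =>
    push_cast
    have e : ((n:ℤ) + 2 + 1) = ((n:ℤ)+1) + 2 := by ring
    rw [e, Polynomial.Chebyshev.T_add_two ℝ ((n:ℤ)+1)]
    have h2C : (2 : ℝ[X]) = Polynomial.C 2 := by norm_cast
    rw [Polynomial.coeff_sub, h2C, mul_assoc, Polynomial.coeff_C_mul]
    have e2 : n + 2 + 1 = (n + 2) + 1 := rfl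
    rw [Polynomial.coeff_X_mul]
    have hz : (Polynomial.Chebyshev.T ℝ ((n:ℤ)+1)).coeff (n+2+1) = 0 := by
      apply Polynomial.coeff_eq_zero_of_natDegree_lt
      have := myT_natDegree_le (n+1)
      push_cast at this
      omega
    have hc : (Polynomial.Chebyshev.T ℝ ((n:ℤ)+2)).coeff (n+2) = 2^(n+1) := by
      have := ih2
      push_cast at this
      rw [show ((n:ℤ)+1)+1 = (n:ℤ)+2 by ring] at this
      exact this
    rw [hz, show (n:ℤ)+1+1 = (n:ℤ)+2 from by ring, hc]
    ring

lemma myT_natDegree (n : ℕ) : (Polynomial.Chebyshev.T ℝ (n : ℤ)).natDegree = n := by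
  cases n with
  | zero => simp [Polynomial.Chebyshev.T_zero]
  | succ m =>
    refine le_antisymm (myT_natDegree_le _) ?_
    apply Polynomial.le_natDegree_of_ne_zero
    have := myT_coeff m
    push_cast at this ⊢
    rw [this]
    positivity

lemma exists_root_of_mul_neg (p : Polynomial ℝ) {a b : ℝ} (hab : a < b)
    (h : p.eval a * p.eval b < 0) : ∃ r ∈ Set.Ioo a b, p.eval r = 0 := by
  have hcont : ContinuousOn (fun y => p.eval y) (Set.Icc a b) :=
    (Polynomial.continuous p).continuousOn
  rcases lt_or_ge (p.eval a) 0 with ha | ha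
  · have hb : 0 < p.eval b := by nlinarith
    have := intermediate_value_Ioo hab.le hcont
    have h0 : (0:ℝ) ∈ Set.Ioo (p.eval a) (p.eval b) := ⟨ha, hb⟩
    obtain ⟨r, hr, hr0⟩ := this h0
    exact ⟨r, hr, hr0⟩
  · have ha' : 0 < p.eval a := by
      rcases ha.lt_or_eq with h1 | h1
      · exact h1
      · exfalso; rw [← h1] at h; simp at h
    have hb : p.eval b < 0 := by nlinarith
    have := intermediate_value_Ioo' hab.le hcont
    have h0 : (0:ℝ) ∈ Set.Ioo (p.eval b) (p.eval a) := ⟨hb, ha'⟩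
    obtain ⟨r, hr, hr0⟩ := this h0
    exact ⟨r, hr, hr0⟩

lemma cos_nat_pi (j : ℕ) : Real.cos (j * Real.pi) = (-1)^j := by
  have := Real.cos_add_int_mul_pi 0 (j : ℤ)
  simp only [zero_add, Real.cos_zero, mul_one] at this
  rw [show ((j:ℤ):ℝ) = (j:ℝ) by push_cast; ring] at this
  rw [this, zpow_natCast]

lemma xp_mem {ℓ u : ℝ} (hℓ : 0 < ℓ) (hlu : ℓ < u) (c : ℝ) (h1 : -1 ≤ c) (h2 : c ≤ 1) :
    (c * (u - ℓ) + (u + ℓ))/2 ∈ Set.Icc ℓ u := by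
  constructor <;> nlinarith

lemma xp_lt {ℓ u c1 c2 : ℝ} (hul : 0 < u - ℓ) (h : c2 < c1) :
    (c2 * (u - ℓ) + (u + ℓ))/2 < (c1 * (u - ℓ) + (u + ℓ))/2 := by nlinarith

lemma cos_theta_lt {k i j : ℕ} (hk : 0 < k) (hij : i < j) (hjk : j ≤ k) :
    Real.cos ((j:ℝ) * Real.pi / k) < Real.cos ((i:ℝ) * Real.pi / k) := by
  have hkR : (0:ℝ) < (k:ℝ) := by exact_mod_cast hk
  have hπ := Real.pi_pos
  apply Real.cos_lt_cos_of_nonneg_of_le_pi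
  · positivity
  · rw [div_le_iff₀ hkR]
    have hj : (j:ℝ) ≤ (k:ℝ) := by exact_mod_cast hjk
    nlinarith
  · rw [div_lt_div_iff_of_pos_right hkR]
    have hijR : (i:ℝ) < (j:ℝ) := by exact_mod_cast hij
    nlinarith

lemma cosh_key {A B : ℝ} (hB : 0 < B) (hBA : B < A) :
    ((A+B)/(A-B) + (A-B)/(A+B))/2 = (A^2+B^2)/(A^2-B^2) := by
  have h1 : A - B ≠ 0 := by linarith
  have h2 : A + B ≠ 0 := by linarith
  have h3 : A^2 - B^2 ≠ 0 := by nlinarith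
  field_simp
  ring

theorem stmt16 (k : ℕ) (hk : 1 ≤ k) (ℓ u : ℝ) (hℓ : 0 < ℓ) (hlu : ℓ < u)
    (Q : Polynomial ℝ)
    (hQ : Q = (Polynomial.Chebyshev.T ℝ (k : ℤ)).comp
      (Polynomial.C (2 / (u - ℓ)) * Polynomial.X - Polynomial.C ((u + ℓ) / (u - ℓ)))) :
    (∀ P : Polynomial ℝ, P.natDegree = k → P.eval 0 = 1 →
        ∃ x ∈ Set.Icc ℓ u, (|Q.eval 0|)⁻¹ ≤ |P.eval x|) ∧
    ((Q * Polynomial.C (Q.eval 0)⁻¹).natDegree = k ∧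
      (Q * Polynomial.C (Q.eval 0)⁻¹).eval 0 = 1 ∧
      ∀ x ∈ Set.Icc ℓ u, |(Q * Polynomial.C (Q.eval 0)⁻¹).eval x| ≤ (|Q.eval 0|)⁻¹) ∧
    (|Q.eval 0|)⁻¹ ≤
      2 * ((Real.sqrt u - Real.sqrt ℓ) / (Real.sqrt u + Real.sqrt ℓ)) ^ k := by
  have hul : (0:ℝ) < u - ℓ := by linarith
  have hkpos : (0:ℝ) < (k:ℝ) := by exact_mod_cast hk
  have hk0 : (k:ℝ) ≠ 0 := ne_of_gt hkpos
  have hev : ∀ x : ℝ, Q.eval x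
      = (Polynomial.Chebyshev.T ℝ (k:ℤ)).eval (2/(u-ℓ)*x - (u+ℓ)/(u-ℓ)) := by
    intro x; rw [hQ, Polynomial.eval_comp]; simp
  have hb0 : 0 < Real.sqrt ℓ := Real.sqrt_pos.2 hℓ
  have hba : Real.sqrt ℓ < Real.sqrt u := Real.sqrt_lt_sqrt hℓ.le hlu
  have ha2 : (Real.sqrt u)^2 = u := Real.sq_sqrt (by linarith)
  have hb2 : (Real.sqrt ℓ)^2 = ℓ := Real.sq_sqrt hℓ.le
  set t := Real.log ((Real.sqrt u + Real.sqrt ℓ)/(Real.sqrt u - Real.sqrt ℓ)) with ht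
  have hfrac : 0 < (Real.sqrt u + Real.sqrt ℓ)/(Real.sqrt u - Real.sqrt ℓ) :=
    div_pos (by linarith) (by linarith)
  have hexp : Real.exp t = (Real.sqrt u + Real.sqrt ℓ)/(Real.sqrt u - Real.sqrt ℓ) :=
    Real.exp_log hfrac
  have hexpneg : Real.exp (-t) = (Real.sqrt u - Real.sqrt ℓ)/(Real.sqrt u + Real.sqrt ℓ) := by
    rw [Real.exp_neg, hexp, inv_div]
  have hcosh : Real.cosh t = (u+ℓ)/(u-ℓ) := by
    rw [Real.cosh_eq, hexp, hexpneg, cosh_key hb0 hba, ha2, hb2]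
  have hQ0 : Q.eval 0 = (-1)^k * Real.cosh ((k:ℝ) * t) := by
    rw [hev 0, show 2/(u-ℓ)*0 - (u+ℓ)/(u-ℓ) = -((u+ℓ)/(u-ℓ)) from by ring,
      myT_neg k, ← hcosh, myT_cosh t k]
  have hcoshpos : 0 < Real.cosh ((k:ℝ) * t) := Real.cosh_pos _
  have habsQ0 : |Q.eval 0| = Real.cosh ((k:ℝ) * t) := by
    rw [hQ0, abs_mul, abs_pow, abs_neg, abs_one, one_pow, one_mul, abs_of_pos hcoshpos]
  have hQ0ne : Q.eval 0 ≠ 0 := by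
    intro h
    rw [h, abs_zero] at habsQ0
    linarith
  have hbound : ∀ x ∈ Set.Icc ℓ u, |Q.eval x| ≤ 1 := by
    rintro x ⟨hx1, hx2⟩
    rw [hev x]
    set y := 2/(u-ℓ)*x - (u+ℓ)/(u-ℓ) with hy
    have hyeq : y = (2*x - (u+ℓ))/(u-ℓ) := by rw [hy]; ring
    have hy1 : -1 ≤ y := by rw [hyeq, le_div_iff₀ hul]; linarith
    have hy2 : y ≤ 1 := by rw [hyeq, div_le_iff₀ hul]; linarith
    rw [show y = Real.cos (Real.arccos y) from (Real.cos_arccos hy1 hy2).symm,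
      Polynomial.Chebyshev.T_real_cos]
    exact Real.abs_cos_le_one _
  have hdegQ : Q.natDegree = k := by
    rw [hQ, Polynomial.natDegree_comp, myT_natDegree]
    have hlin : (Polynomial.C (2/(u-ℓ)) * Polynomial.X
        - Polynomial.C ((u+ℓ)/(u-ℓ))).natDegree = 1 := by
      rw [sub_eq_add_neg, ← Polynomial.C_neg]
      exact Polynomial.natDegree_linear (by positivity)
    rw [hlin, mul_one]
  refine ⟨?_, ⟨?_, ?_, ?_⟩, ?_⟩
  · -- Part 1: extremal property
    intro P hPdeg hP0
    by_contra hcon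
    push_neg at hcon
    set S := Q - Polynomial.C (Q.eval 0) * P with hS
    have hS0 : S.eval 0 = 0 := by simp [hS, hP0]
    have hSdeg : S.natDegree ≤ k := by
      refine le_trans (Polynomial.natDegree_sub_le _ _) (max_le hdegQ.le ?_)
      exact le_trans (Polynomial.natDegree_C_mul_le _ _) hPdeg.le
    set xp : ℕ → ℝ := fun j => (Real.cos ((j:ℝ) * Real.pi / k) * (u - ℓ) + (u + ℓ))/2
      with hxp
    have hxmem : ∀ j : ℕ, xp j ∈ Set.Icc ℓ u := by
      intro j
      simp only [hxp]
      exact xp_mem hℓ hlu _ (Real.neg_one_le_cos _) (Real.cos_le_one _)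
    have hQval : ∀ j : ℕ, Q.eval (xp j) = (-1)^j := by
      intro j
      rw [hev]
      have h1 : 2/(u-ℓ)*(xp j) - (u+ℓ)/(u-ℓ) = Real.cos ((j:ℝ) * Real.pi / k) := by
        simp only [hxp]
        field_simp
        ring
      rw [h1, Polynomial.Chebyshev.T_real_cos]
      have h2 : ((k:ℤ):ℝ) * ((j:ℝ) * Real.pi / k) = (j:ℝ) * Real.pi := by
        push_cast
        field_simp
      rw [h2, cos_nat_pi]
    have hanti : ∀ i j : ℕ, i < j → j ≤ k → xp j < xp i := by
      intro i j hij hjk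
      have hcos := cos_theta_lt (by omega : 0 < k) hij hjk
      simp only [hxp]
      exact xp_lt hul hcos
    have hsign : ∀ j : ℕ, j ≤ k → 0 < (-1:ℝ)^j * S.eval (xp j) := by
      intro j hjk
      have hPb := hcon (xp j) (hxmem j)
      have habs : |Q.eval 0 * P.eval (xp j)| < 1 := by
        rw [abs_mul]
        calc |Q.eval 0| * |P.eval (xp j)| < |Q.eval 0| * (|Q.eval 0|)⁻¹ :=
              mul_lt_mul_of_pos_left hPb (abs_pos.2 hQ0ne)
          _ = 1 := mul_inv_cancel₀ (abs_ne_zero.2 hQ0ne)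
      have hSe : S.eval (xp j) = (-1)^j - Q.eval 0 * P.eval (xp j) := by
        rw [hS]
        simp only [Polynomial.eval_sub, Polynomial.eval_mul, Polynomial.eval_C, hQval j]
      have h1 : (-1:ℝ)^j * (Q.eval 0 * P.eval (xp j)) ≤ |Q.eval 0 * P.eval (xp j)| := by
        calc (-1:ℝ)^j * (Q.eval 0 * P.eval (xp j))
            ≤ |(-1:ℝ)^j * (Q.eval 0 * P.eval (xp j))| := le_abs_self _
          _ = |Q.eval 0 * P.eval (xp j)| := by
              rw [abs_mul, abs_pow, abs_neg, abs_one, one_pow, one_mul]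
      have h2 : (-1:ℝ)^j * ((-1:ℝ)^j) = 1 := by
        rw [← mul_pow]; norm_num
      have h3 : (-1:ℝ)^j * S.eval (xp j)
          = 1 - (-1:ℝ)^j * (Q.eval 0 * P.eval (xp j)) := by
        rw [hSe, mul_sub, h2]
      rw [h3]
      linarith
    have hroot : ∀ j : Fin k, ∃ rr : ℝ,
        rr ∈ Set.Ioo (xp ((j:ℕ)+1)) (xp (j:ℕ)) ∧ S.eval rr = 0 := by
      intro j
      have hjk : (j:ℕ) < k := j.2
      have hlt : xp ((j:ℕ)+1) < xp (j:ℕ) := hanti _ _ (Nat.lt_succ_self _) (by omega)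
      have h1 := hsign (j:ℕ) (by omega)
      have h2 := hsign ((j:ℕ)+1) (by omega)
      have hmul : S.eval (xp ((j:ℕ)+1)) * S.eval (xp (j:ℕ)) < 0 := by
        rcases Nat.even_or_odd (j:ℕ) with hpar | hpar
        · rw [hpar.neg_one_pow, one_mul] at h1
          rw [(Even.add_one hpar).neg_one_pow] at h2
          nlinarith
        · rw [hpar.neg_one_pow] at h1
          rw [(Odd.add_one hpar).neg_one_pow, one_mul] at h2
          nlinarith
      obtain ⟨r, hr, hr0⟩ := exists_root_of_mul_neg S hlt hmul
      exact ⟨r, hr, hr0⟩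
    choose r hrmem hrzero using hroot
    have hrlt : ∀ i j : Fin k, i < j → r j < r i := by
      intro i j hij
      have h1 := (hrmem j).2
      have h2 := (hrmem i).1
      have h3 : xp (j:ℕ) ≤ xp ((i:ℕ)+1) := by
        rcases eq_or_lt_of_le (show (i:ℕ)+1 ≤ (j:ℕ) from hij) with h | h
        · rw [h]
        · exact le_of_lt (hanti _ _ h (le_of_lt j.2))
      linarith
    have hrinj : Function.Injective r := by
      intro i j hij
      by_contra hne
      rcases lt_or_gt_of_ne hne with h | h
      · exact absurd hij (by have := hrlt i j h; intro he; rw [he] at this; exact lt_irrefl _ this)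
      · exact absurd hij (by have := hrlt j i h; intro he; rw [he] at this; exact lt_irrefl _ this)
    have hrpos : ∀ j : Fin k, 0 < r j := by
      intro j
      have h1 := (hrmem j).1
      have h2 := (hxmem ((j:ℕ)+1)).1
      linarith
    set F : Finset ℝ := insert 0 (Finset.image r Finset.univ) with hF
    have hcard : k + 1 ≤ F.card := by
      rw [hF, Finset.card_insert_of_notMem]
      · rw [Finset.card_image_of_injective _ hrinj, Finset.card_univ, Fintype.card_fin]
      · simp only [Finset.mem_image]
        rintro ⟨j, _, hj⟩
        exact (hrpos j).ne' hj
    have hzero : ∀ z ∈ F, S.eval z = 0 := by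
      intro z hz
      rw [hF, Finset.mem_insert] at hz
      rcases hz with rfl | hz
      · exact hS0
      · simp only [Finset.mem_image] at hz
        obtain ⟨j, _, hj⟩ := hz
        rw [← hj]
        exact hrzero j
    have hSzero : S = 0 :=
      Polynomial.eq_zero_of_natDegree_lt_card_of_eval_eq_zero' S F hzero
        (lt_of_lt_of_le (by omega) hcard)
    have hcontra := hsign 0 (by omega)
    rw [hSzero] at hcontra
    simp at hcontra
  · rw [Polynomial.natDegree_mul_C (inv_ne_zero hQ0ne), hdegQ]
  · simp [Polynomial.eval_mul, mul_inv_cancel₀ hQ0ne]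
  · intro x hx
    rw [Polynomial.eval_mul, Polynomial.eval_C, abs_mul, abs_inv]
    calc |Q.eval x| * (|Q.eval 0|)⁻¹ ≤ 1 * (|Q.eval 0|)⁻¹ :=
          mul_le_mul_of_nonneg_right (hbound x hx) (by positivity)
      _ = (|Q.eval 0|)⁻¹ := one_mul _
  · rw [habsQ0]
    have h1 : Real.exp ((k:ℝ)*t) / 2 ≤ Real.cosh ((k:ℝ)*t) := by
      rw [Real.cosh_eq]
      have := Real.exp_pos (-((k:ℝ)*t))
      linarith
    have h2 : (Real.cosh ((k:ℝ)*t))⁻¹ ≤ (Real.exp ((k:ℝ)*t)/2)⁻¹ :=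
      inv_anti₀ (by positivity) h1
    refine h2.trans_eq ?_
    rw [inv_div, div_eq_mul_inv, ← Real.exp_neg, show -((k:ℝ)*t) = (k:ℝ)*(-t) from by ring,
      Real.exp_nat_mul, hexpneg]
end
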